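/- The positive integer solutions of the equation 5m̃² − m² = 1 are exactly the pairs (m, m̃) with m = (1/2)((2+√5)^(2n+1) + (2−√5)^(2n+1)) and m̃ = (√5/10)((2+√5)^(2n+1) − (2−√5)^(2n+1)) for some n ∈ ℕ; in particular the smallest solutions are (m, m̃) = (2,1), (38,17), (682,305). -/
import Mathlib

/-- Sequence of solutions to `5 T² - M² = 1`. -/
def pellP : ℕ → ℤ × ℤ
  | 0 => (2, 1)
  | n + 1 => (9 * (pellP n).1 + 20 * (pellP n).2, 4 * (pellP n).1 + 9 * (pellP n).2)

lemma pellP_norm (n : ℕ) : 5 * (pellP n).2 ^ 2 - (pellP n).1 ^ 2 = 1 := by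
  induction n with
  | zero => simp [pellP]
  | succ n ih =>
    simp only [pellP]
    linear_combination ih

lemma pellP_real (n : ℕ) :
    (((pellP n).1 : ℝ) = (1/2) * ((2 + Real.sqrt 5)^(2*n+1) + (2 - Real.sqrt 5)^(2*n+1)))
    ∧ (((pellP n).2 : ℝ) = (Real.sqrt 5/10) * ((2 + Real.sqrt 5)^(2*n+1) - (2 - Real.sqrt 5)^(2*n+1))) := by
  have hs : Real.sqrt 5 ^ 2 = 5 := Real.sq_sqrt (by norm_num)
  induction n with
  | zero =>
    constructor
    · norm_num [pellP]
    · simp only [pellP, Nat.mul_zero, Nat.zero_add, pow_one]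
      push_cast
      linear_combination (-1/5 : ℝ) * hs
  | succ n ih =>
    obtain ⟨ih1, ih2⟩ := ih
    have hpow : 2 * (n + 1) + 1 = (2 * n + 1) + 2 := by ring
    constructor
    · simp only [pellP, hpow, pow_add]
      push_cast
      rw [ih1, ih2]
      linear_combination (-((2 + Real.sqrt 5)^(2*n+1) + (2 - Real.sqrt 5)^(2*n+1))/2) * hs
    · simp only [pellP, hpow, pow_add]
      push_cast
      rw [ih1, ih2]
      linear_combination (-(Real.sqrt 5 * ((2 + Real.sqrt 5)^(2*n+1) - (2 - Real.sqrt 5)^(2*n+1))/10)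
        - 2*((2 + Real.sqrt 5)^(2*n+1) + (2 - Real.sqrt 5)^(2*n+1))/5) * hs

lemma pell_descent : ∀ k : ℕ, ∀ m mt : ℤ, m.natAbs = k → 0 < m → 0 < mt →
    5 * mt ^ 2 - m ^ 2 = 1 → ∃ n : ℕ, m = (pellP n).1 ∧ mt = (pellP n).2 := by
  intro k
  induction k using Nat.strong_induction_on with
  | _ k ih =>
    intro m mt hk hm hmt heq
    by_cases h2 : m = 2
    · subst h2
      have hmt1 : mt = 1 := by nlinarith
      exact ⟨0, by simp [pellP, hmt1]⟩
    · have hm9 : 9 ≤ m := by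
        by_contra h
        push_neg at h
        have hmle : mt ≤ 3 := by nlinarith
        interval_cases m <;> interval_cases mt <;> omega
      set m' := 9 * m - 20 * mt with hm'
      set mt' := 9 * mt - 4 * m with hmt'
      have heq' : 5 * mt' ^ 2 - m' ^ 2 = 1 := by
        simp only [hm', hmt']
        linear_combination heq
      have hm'pos : 0 < m' := by nlinarith
      have hmt'pos : 0 < mt' := by nlinarith
      have hlt : m' < m := by nlinarith
      obtain ⟨n, h1, h2⟩ := ih m'.natAbs (by omega) m' mt' rfl hm'pos hmt'pos heq'
      refine ⟨n + 1, ?_, ?_⟩ <;> simp only [pellP, ← h1, ← h2] <;> omega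

/-- Positive integer solutions of the negative-Pell-type equation `5m̃² - m² = 1`. -/
theorem stmt10 :
    (∀ m mt : ℤ, 0 < m → 0 < mt →
      (5 * mt^2 - m^2 = 1 ↔
        ∃ n : ℕ, (m : ℝ) = (1/2) * ((2 + Real.sqrt 5)^(2*n+1) + (2 - Real.sqrt 5)^(2*n+1))
          ∧ (mt : ℝ) = (Real.sqrt 5/10) * ((2 + Real.sqrt 5)^(2*n+1) - (2 - Real.sqrt 5)^(2*n+1))))
    ∧ 5 * (1 : ℤ)^2 - 2^2 = 1 ∧ 5 * (17 : ℤ)^2 - 38^2 = 1 ∧ 5 * (305 : ℤ)^2 - 682^2 = 1 := by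
  refine ⟨?_, by norm_num, by norm_num, by norm_num⟩
  intro m mt hm hmt
  constructor
  · intro heq
    obtain ⟨n, h1, h2⟩ := pell_descent m.natAbs m mt rfl hm hmt heq
    obtain ⟨r1, r2⟩ := pellP_real n
    exact ⟨n, by rw [h1]; exact r1, by rw [h2]; exact r2⟩
  · rintro ⟨n, h1, h2⟩
    obtain ⟨r1, r2⟩ := pellP_real n
    have e1 : m = (pellP n).1 := by exact_mod_cast h1.trans r1.symm
    have e2 : mt = (pellP n).2 := by exact_mod_cast h2.trans r2.symm
    rw [e1, e2]
    exact pellP_norm n
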